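/- Let r^c be a unit vector in ℝ³, σ ≥ 0, ε ≥ 0, p ∈ ℝ³ and q ∈ ℝ. Set θ = ∠(r^c, p), t⁻ = −ε − ‖p‖·cos(max{θ − √2σ, 0}) + q and t⁺ = ε − ‖p‖·cos(min{θ + √2σ, π}) + q. If r is a unit vector with ∠(r, r^c) ≤ √2σ and t ∈ ℝ satisfies |⟪r, p⟫ + t − q| ≤ ε, then t⁻ ≤ t ≤ t⁺. -/
import Mathlib

open InnerProductGeometry
open scoped RealInnerProductSpace

lemma angle_triangle_unit {V : Type*} [NormedAddCommGroup V] [InnerProductSpace ℝ V]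
    (x y z : V) (hx : ‖x‖ = 1) (hy : ‖y‖ = 1) (hz : ‖z‖ = 1) :
    angle x z ≤ angle x y + angle y z := by
  set a := angle x y with ha
  set b := angle y z with hb
  set c := angle x z with hc
  rcases le_or_gt Real.pi (a + b) with hab | hab
  · exact le_trans (angle_le_pi x z) hab
  · by_contra hcon
    push_neg at hcon
    have hca : Real.cos a = ⟪x, y⟫ := by
      rw [ha, cos_angle, hx, hy]; ring
    have hcb : Real.cos b = ⟪y, z⟫ := by
      rw [hb, cos_angle, hy, hz]; ring
    have hcc : Real.cos c = ⟪x, z⟫ := by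
      rw [hc, cos_angle, hx, hz]; ring
    set x' := x - ⟪x, y⟫ • y with hx'
    set z' := z - ⟪y, z⟫ • y with hz'
    have hyy : ⟪y, y⟫ = (1:ℝ) := by
      rw [real_inner_self_eq_norm_sq, hy]; norm_num
    have hxx : ⟪x, x⟫ = (1:ℝ) := by
      rw [real_inner_self_eq_norm_sq, hx]; norm_num
    have hzz : ⟪z, z⟫ = (1:ℝ) := by
      rw [real_inner_self_eq_norm_sq, hz]; norm_num
    have h1 : ⟪x', z'⟫ = ⟪x, z⟫ - ⟪x, y⟫ * ⟪y, z⟫ := by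
      simp only [hx', hz', inner_sub_left, inner_sub_right, real_inner_smul_left,
        real_inner_smul_right, hyy, real_inner_comm y x]
      ring
    have hnx : ‖x'‖ ^ 2 = 1 - ⟪x, y⟫ ^ 2 := by
      rw [← real_inner_self_eq_norm_sq]
      simp only [hx', inner_sub_left, inner_sub_right, real_inner_smul_left,
        real_inner_smul_right, hyy, hxx, real_inner_comm y x]
      ring
    have hnz : ‖z'‖ ^ 2 = 1 - ⟪y, z⟫ ^ 2 := by
      rw [← real_inner_self_eq_norm_sq]
      simp only [hz', inner_sub_left, inner_sub_right, real_inner_smul_left,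
        real_inner_smul_right, hyy, hzz, real_inner_comm z y]
      ring
    have hsa : Real.sin a = ‖x'‖ := by
      rw [Real.sin_eq_sqrt_one_sub_cos_sq (angle_nonneg x y) (angle_le_pi x y), hca, ← hnx,
        Real.sqrt_sq (norm_nonneg _)]
    have hsb : Real.sin b = ‖z'‖ := by
      rw [Real.sin_eq_sqrt_one_sub_cos_sq (angle_nonneg y z) (angle_le_pi y z), hcb, ← hnz,
        Real.sqrt_sq (norm_nonneg _)]
    have hCS : -(‖x'‖ * ‖z'‖) ≤ ⟪x', z'⟫ := neg_le_of_abs_le (abs_real_inner_le_norm x' z')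
    have hcosab : Real.cos (a + b) ≤ Real.cos c := by
      rw [Real.cos_add, hca, hcb, hcc, hsa, hsb]
      have := h1
      linarith [hCS, h1.symm.le, h1.le]
    have hlt : Real.cos c < Real.cos (a + b) := by
      exact Real.cos_lt_cos_of_nonneg_of_le_pi
        (add_nonneg (angle_nonneg x y) (angle_nonneg y z)) (angle_le_pi x z) hcon
    linarith

theorem residual_implies_interval (rc : EuclideanSpace ℝ (Fin 3)) (hrc : ‖rc‖ = 1)
    (σ ε : ℝ) (hσ : 0 ≤ σ) (hε : 0 ≤ ε) (p : EuclideanSpace ℝ (Fin 3)) (q : ℝ)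
    (r : EuclideanSpace ℝ (Fin 3)) (hr : ‖r‖ = 1)
    (hang : angle r rc ≤ Real.sqrt 2 * σ) (t : ℝ)
    (ht : |⟪r, p⟫ + t - q| ≤ ε) :
    -ε - ‖p‖ * Real.cos (max (angle rc p - Real.sqrt 2 * σ) 0) + q ≤ t ∧
      t ≤ ε - ‖p‖ * Real.cos (min (angle rc p + Real.sqrt 2 * σ) Real.pi) + q := by
  rw [abs_le] at ht
  rcases eq_or_ne p 0 with hp | hp
  · subst hp
    simp only [inner_zero_right, norm_zero, zero_mul, sub_zero, zero_add] at ht ⊢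
    constructor <;> linarith [ht.1, ht.2]
  · set δ := Real.sqrt 2 * σ with hδ
    have hδ0 : 0 ≤ δ := by positivity
    have hpn : (0:ℝ) < ‖p‖ := norm_pos_iff.mpr hp
    set u : EuclideanSpace ℝ (Fin 3) := ‖p‖⁻¹ • p with hu
    have hun : ‖u‖ = 1 := by
      rw [hu, norm_smul, norm_inv, norm_norm, inv_mul_cancel₀ hpn.ne']
    have hau : angle rc u = angle rc p := angle_smul_right_of_pos rc p (by positivity)
    have hau' : angle r u = angle r p := angle_smul_right_of_pos r p (by positivity)
    set θ := angle rc p with hθ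
    set φ := angle r p with hφ
    -- triangle inequalities
    have h1 : φ ≤ θ + δ := by
      have := angle_triangle_unit r rc u hr hrc hun
      rw [hau, hau'] at this
      linarith
    have h2 : θ - δ ≤ φ := by
      have := angle_triangle_unit rc r u hrc hr hun
      rw [hau, hau', angle_comm rc r] at this
      linarith
    have hφ0 : 0 ≤ φ := angle_nonneg r p
    have hφπ : φ ≤ Real.pi := angle_le_pi r p
    have hθπ : θ ≤ Real.pi := angle_le_pi rc p
    have hcos1 : Real.cos φ ≤ Real.cos (max (θ - δ) 0) := by
      apply Real.cos_le_cos_of_nonneg_of_le_pi (le_max_right _ _) hφπ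
      exact max_le h2 hφ0
    have hcos2 : Real.cos (min (θ + δ) Real.pi) ≤ Real.cos φ := by
      apply Real.cos_le_cos_of_nonneg_of_le_pi hφ0 (min_le_right _ _)
      exact le_min h1 hφπ
    have hip : ⟪r, p⟫ = ‖p‖ * Real.cos φ := by
      have := cos_angle_mul_norm_mul_norm r p
      rw [hr] at this
      rw [← hφ] at this
      linarith
    have hb1 : ⟪r, p⟫ ≤ ‖p‖ * Real.cos (max (θ - δ) 0) := by
      rw [hip]; exact mul_le_mul_of_nonneg_left hcos1 hpn.le
    have hb2 : ‖p‖ * Real.cos (min (θ + δ) Real.pi) ≤ ⟪r, p⟫ := by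
      rw [hip]; exact mul_le_mul_of_nonneg_left hcos2 hpn.le
    exact ⟨by linarith [ht.1], by linarith [ht.2]⟩
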